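/- Let F be a GIFS of order m on a complete metric space X. For every nonempty compact D ⊆ X, lim_{k→∞} max{diam(f_α(D_k)) : α ∈ ₖΩ} = 0, where D_k is the k-fold iterated m-fold product of D. In particular, max{diam f_α(D_k) : α ∈ ₖΩ} ≤ φ^(k)(diam D) for a suitable witness φ. -/

import Mathlib

open TopologicalSpace Filter Metric

/-- The code space levels for a GIFS: `GifsCode n m k` represents `ₖ₊₁Ω`
(sequences `(α¹,...,α^{k+1})` with `α¹ ∈ {1,...,n}`, `α^{s+1} ∈ Ω_s^m`), in the
tree representation `ₖ₊₁Ω ≅ Ω₁ × (ₖΩ)^m`. -/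
def GifsCode (n m : ℕ) : ℕ → Type
  | 0 => Fin n
  | k + 1 => Fin n × (Fin m → GifsCode n m k)

/-- The iterated product spaces: `GifsSp X m k` represents `X_{k+1}`,
where `X_1 = X^m` and `X_{k+1} = X_k^m`. -/
def GifsSp (X : Type*) (m : ℕ) : ℕ → Type _
  | 0 => Fin m → X
  | k + 1 => Fin m → GifsSp X m k

/-- The iterated maps `f_α : X_{k+1} → X` for `α ∈ ₖ₊₁Ω`, defined by
`f_{(α¹,...,α^{k+1})}(x₁,...,x_m) = f_{α¹}(f_{α(1)}(x₁),...,f_{α(m)}(x_m))`. -/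
def gifsIter {X : Type*} {n m : ℕ} (f : Fin n → (Fin m → X) → X) :
    ∀ k, GifsCode n m k → GifsSp X m k → X
  | 0, a, x => f a x
  | k + 1, a, x => f a.1 (fun i => gifsIter f k (a.2 i) (x i))

/-- The iterated product sets `D_{k+1} ⊆ X_{k+1}`: `D_1 = D^m`, `D_{k+1} = D_k^m`. -/
def gifsProdSet {X : Type*} {m : ℕ} (D : Set X) : ∀ k, Set (GifsSp X m k)
  | 0 => Set.pi Set.univ (fun _ : Fin m => D)
  | k + 1 => Set.pi Set.univ (fun _ : Fin m => gifsProdSet D k)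

lemma gifsCode_nonempty {n m : ℕ} (hn : 0 < n) : ∀ k, Nonempty (GifsCode n m k)
  | 0 => ⟨⟨0, hn⟩⟩
  | k + 1 => ⟨⟨⟨0, hn⟩, fun _ => (gifsCode_nonempty hn k).some⟩⟩

lemma iter_nonneg {φ : ℝ → ℝ} (hφ_nonneg : ∀ t, 0 ≤ t → 0 ≤ φ t) :
    ∀ k t, 0 ≤ t → 0 ≤ φ^[k] t := by
  intro k
  induction k with
  | zero => simpa using fun t ht => ht
  | succ k ih =>
      intro t ht
      rw [Function.iterate_succ_apply]
      exact ih _ (hφ_nonneg t ht)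


lemma gifs_key0 {X : Type*} [MetricSpace X] {n m : ℕ}
    (φ : ℝ → ℝ) (hφ_mono : MonotoneOn φ (Set.Ici 0))
    (f : Fin n → (Fin m → X) → X)
    (hf : ∀ i, ∀ x y : Fin m → X, dist (f i x) (f i y) ≤ φ (dist x y))
    (D : Set X) (hD₂ : IsCompact D) (hdD : 0 ≤ diam D)
    (α : Fin n) (x y : Fin m → X) (hx : ∀ i, x i ∈ D) (hy : ∀ i, y i ∈ D) :
    dist (f α x) (f α y) ≤ φ (diam D) := by
  have hxy : dist x y ≤ diam D := by
    rw [dist_pi_le_iff hdD]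
    exact fun i => dist_le_diam_of_mem hD₂.isBounded (hx i) (hy i)
  exact (hf α x y).trans (hφ_mono dist_nonneg hdD hxy)

/-- For a GIFS with common witness `φ` and any nonempty compact `D`,
`max{diam f_α(D_k) : α ∈ ₖΩ} ≤ φ^(k)(diam D)` and this maximum tends to `0`.
(The index `k : ℕ` corresponds to the paper's level `k+1`.) -/
theorem stmt10 {X : Type*} [MetricSpace X] [CompleteSpace X]
    {n m : ℕ} (hn : 0 < n)
    (φ : ℝ → ℝ) (hφ_mono : MonotoneOn φ (Set.Ici 0))
    (hφ_nonneg : ∀ t, 0 ≤ t → 0 ≤ φ t)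
    (hφ_iter : ∀ t > 0, Tendsto (fun k => φ^[k] t) atTop (nhds 0))
    (f : Fin n → (Fin m → X) → X)
    (hf : ∀ i, ∀ x y : Fin m → X, dist (f i x) (f i y) ≤ φ (dist x y))
    (D : Set X) (hD₁ : D.Nonempty) (hD₂ : IsCompact D) :
    (∀ k (α : GifsCode n m k),
      diam (gifsIter f k α '' gifsProdSet D k) ≤ φ^[k + 1] (diam D)) ∧
    Tendsto (fun k => ⨆ α : GifsCode n m k, diam (gifsIter f k α '' gifsProdSet D k))
      atTop (nhds 0) := by
  have hdD : (0 : ℝ) ≤ diam D := diam_nonneg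
  have hiter_nn : ∀ k, 0 ≤ φ^[k] (diam D) := fun k => iter_nonneg hφ_nonneg k _ hdD
  -- key distance estimate
  have key : ∀ k (α : GifsCode n m k), ∀ x ∈ gifsProdSet D k, ∀ y ∈ gifsProdSet D k,
      dist (gifsIter f k α x) (gifsIter f k α y) ≤ φ^[k + 1] (diam D) := by
    intro k
    induction k with
    | zero =>
        intro α x hx y hy
        have := gifs_key0 φ hφ_mono f hf D hD₂ hdD α x y
          (fun i => hx i (Set.mem_univ i)) (fun i => hy i (Set.mem_univ i))
        simpa [gifsIter] using this
    | succ k ih =>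
        intro α x hx y hy
        have hxy : dist (fun i => gifsIter f k (α.2 i) (x i))
            (fun i => gifsIter f k (α.2 i) (y i)) ≤ φ^[k + 1] (diam D) := by
          rw [dist_pi_le_iff (hiter_nn (k + 1))]
          exact fun i => ih (α.2 i) (x i) (hx i (Set.mem_univ i)) (y i) (hy i (Set.mem_univ i))
        calc dist (gifsIter f (k + 1) α x) (gifsIter f (k + 1) α y)
            ≤ φ (dist (fun i => gifsIter f k (α.2 i) (x i))
              (fun i => gifsIter f k (α.2 i) (y i))) := hf α.1 _ _
          _ ≤ φ (φ^[k + 1] (diam D)) := hφ_mono dist_nonneg (hiter_nn (k + 1)) hxy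
          _ = φ^[k + 1 + 1] (diam D) := (Function.iterate_succ_apply' φ (k + 1) _).symm
  have hdiam : ∀ k (α : GifsCode n m k),
      diam (gifsIter f k α '' gifsProdSet D k) ≤ φ^[k + 1] (diam D) := by
    intro k α
    apply diam_le_of_forall_dist_le (hiter_nn (k + 1))
    rintro _ ⟨x, hx, rfl⟩ _ ⟨y, hy, rfl⟩
    exact key k α x hx y hy
  refine ⟨hdiam, ?_⟩
  -- the bound tends to 0
  have hb : Tendsto (fun k => φ^[k + 1] (diam D)) atTop (nhds 0) := by
    rcases lt_or_eq_of_le hdD with h | h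
    · exact (tendsto_add_atTop_iff_nat 1).2 (hφ_iter _ h)
    · have h0 : φ^[1] (diam D) = φ (diam D) := by simp
      rcases lt_or_eq_of_le (hφ_nonneg (diam D) hdD) with h1 | h1
      · have : Tendsto (fun k => φ^[k] (φ (diam D))) atTop (nhds 0) := hφ_iter _ h1
        have heq : ∀ k, φ^[k + 1] (diam D) = φ^[k] (φ (diam D)) := fun k =>
          Function.iterate_succ_apply φ k _
        simpa [heq] using this
      · have hfix : φ 0 = 0 := by nth_rewrite 1 [h]; exact h1.symm
        have : ∀ k, φ^[k + 1] (diam D) = 0 := by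
          intro k
          rw [← h, Function.iterate_fixed hfix]
        simpa [this] using tendsto_const_nhds
  haveI : ∀ k, Nonempty (GifsCode n m k) := gifsCode_nonempty hn
  apply tendsto_of_tendsto_of_tendsto_of_le_of_le tendsto_const_nhds hb
  · exact fun k => Real.iSup_nonneg fun α => diam_nonneg
  · exact fun k => Real.iSup_le (fun α => hdiam k α) (hiter_nn (k + 1))
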